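/- Let G be a bipartite graph of order n ≥ 6 without isolated vertices having a unique minimum dominating set of size 2. Then the number of edges of G is at most n(n−2)/4 if n is even, and at most (n−1)²/4 if n is odd. -/

import Mathlib

def IsDomSet {V : Type*} (G : SimpleGraph V) (D : Finset V) : Prop :=
  ∀ v, v ∉ D → ∃ u ∈ D, G.Adj u v

def IsUMDS {V : Type*} (G : SimpleGraph V) (D : Finset V) : Prop :=
  IsDomSet G D ∧ (∀ D', IsDomSet G D' → D.card ≤ D'.card) ∧
    (∀ D', IsDomSet G D' → D'.card = D.card → D' = D)

private lemma fin2_eq : ∀ x y z : Fin 2, x ≠ z → y ≠ z → x = y := by decide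
private lemma fin2_or : ∀ x y z : Fin 2, x ≠ y → z = x ∨ z = y := by decide

private lemma sq_ge_of_ne (A B : ℕ) (h : A ≠ B) : 1 ≤ ((A:ℤ) - B)^2 := by
  have h0 : (A:ℤ) - B ≠ 0 := sub_ne_zero.mpr (by exact_mod_cast h)
  rcases h0.lt_or_gt with h1 | h1 <;> nlinarith

private lemma final1 (n e A B : ℕ) (h6 : 6 ≤ n) (hsum : n = A + B + 1)
    (he : e ≤ A * B) :
    (Even n → e ≤ n * (n - 2) / 4) ∧ (Odd n → e ≤ (n - 1) ^ 2 / 4) := by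
  have hez : (e:ℤ) ≤ (A:ℤ) * B := by exact_mod_cast he
  have hnz : (n:ℤ) = (A:ℤ) + B + 1 := by exact_mod_cast hsum
  constructor
  · intro hev
    rw [Nat.le_div_iff_mul_le (by norm_num : 0 < 4)]
    have hAB : A ≠ B := by obtain ⟨k, hk⟩ := hev; omega
    have h1 := sq_ge_of_ne A B hAB
    zify [show 2 ≤ n from by omega]
    rw [hnz]
    nlinarith [h1, hez]
  · intro _
    rw [Nat.le_div_iff_mul_le (by norm_num : 0 < 4)]
    zify [show 1 ≤ n from by omega]
    rw [hnz]
    nlinarith [sq_nonneg ((A:ℤ) - B), hez]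

private lemma final2 (n e A B : ℕ) (h6 : 6 ≤ n) (hsum : n = A + B + 1)
    (hd : A + 2 ≤ B) (he : e ≤ A * B + 1) :
    (Even n → e ≤ n * (n - 2) / 4) ∧ (Odd n → e ≤ (n - 1) ^ 2 / 4) := by
  have hez : (e:ℤ) ≤ (A:ℤ) * B + 1 := by exact_mod_cast he
  have hnz : (n:ℤ) = (A:ℤ) + B + 1 := by exact_mod_cast hsum
  constructor
  · intro hev
    rw [Nat.le_div_iff_mul_le (by norm_num : 0 < 4)]
    have hd3 : A + 3 ≤ B := by obtain ⟨k, hk⟩ := hev; omega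
    have hd3z : (A:ℤ) + 3 ≤ B := by exact_mod_cast hd3
    have h9 : 9 ≤ ((B:ℤ) - A)^2 := by nlinarith
    zify [show 2 ≤ n from by omega]
    rw [hnz]
    nlinarith [h9, hez]
  · intro _
    rw [Nat.le_div_iff_mul_le (by norm_num : 0 < 4)]
    have hdz : (A:ℤ) + 2 ≤ B := by exact_mod_cast hd
    have h4 : 4 ≤ ((B:ℤ) - A)^2 := by nlinarith
    zify [show 1 ≤ n from by omega]
    rw [hnz]
    nlinarith [h4, hez]

private lemma final3 (n e p : ℕ) (hnp : n = 2*p + 2) (he : e ≤ p * p + p) :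
    (Even n → e ≤ n * (n - 2) / 4) ∧ (Odd n → e ≤ (n - 1) ^ 2 / 4) := by
  constructor
  · intro _
    rw [Nat.le_div_iff_mul_le (by norm_num : 0 < 4)]
    have h2 : n - 2 = 2*p := by omega
    rw [h2, hnp]
    nlinarith [he]
  · intro hodd
    exfalso; obtain ⟨k, hk⟩ := hodd; omega

theorem stmt11 {V : Type*} [Fintype V] (G : SimpleGraph V) (n : ℕ)
    (hn : Fintype.card V = n) (h6 : 6 ≤ n)
    (hbip : G.Colorable 2)
    (hiso : ∀ v : V, ∃ u, G.Adj u v)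
    (D : Finset V) (hD : IsUMDS G D) (hcard : D.card = 2) :
    (Even n → G.edgeSet.ncard ≤ n * (n - 2) / 4) ∧
    (Odd n → G.edgeSet.ncard ≤ (n - 1) ^ 2 / 4) := by
  classical
  obtain ⟨hdom, hmin, huniq⟩ := hD
  obtain ⟨a, b, hab, rfl⟩ := Finset.card_eq_two.mp hcard
  obtain ⟨c⟩ := hbip
  have hvalid : ∀ {u v}, G.Adj u v → c u ≠ c v := fun h => c.valid h
  -- uniqueness helper : any other 2-element dominating set gives a contradiction
  have huniq2 : ∀ u w : V, u ≠ w → u ≠ a → u ≠ b → IsDomSet G {u, w} → False := by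
    intro u w huw hua hub hdom'
    have hcard2 : ({u, w} : Finset V).card = 2 := Finset.card_pair huw
    have heq := huniq {u, w} hdom' (hcard2.trans hcard.symm)
    have hmem : u ∈ ({a, b} : Finset V) := by
      rw [← heq]; exact Finset.mem_insert_self u {w}
    simp only [Finset.mem_insert, Finset.mem_singleton] at hmem
    tauto
  have hdomab : ∀ v, v ≠ a → v ≠ b → G.Adj a v ∨ G.Adj b v := by
    intro v h1 h2
    obtain ⟨u, hu, hadj⟩ := hdom v (by simp [h1, h2])
    simp only [Finset.mem_insert, Finset.mem_singleton] at hu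
    rcases hu with rfl | rfl
    · exact Or.inl hadj
    · exact Or.inr hadj
  set S : Finset (V × V) := Finset.univ.filter (fun p => G.Adj p.1 p.2 ∧ c p.1 = c a) with hSdef
  have hmemS : ∀ p : V × V, p ∈ S ↔ G.Adj p.1 p.2 ∧ c p.1 = c a := by
    intro p; simp [hSdef]
  have hecard : G.edgeSet.ncard = S.card := by
    have himg : G.edgeSet = (fun p : V × V => s(p.1, p.2)) '' ↑S := by
      ext e
      refine Sym2.inductionOn e fun u v => ?_
      constructor
      · intro huv
        rw [SimpleGraph.mem_edgeSet] at huv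
        rcases fin2_or (c u) (c v) (c a) (hvalid huv) with h | h
        · exact ⟨(u, v), by rw [Finset.mem_coe, hmemS]; exact ⟨huv, h.symm⟩, rfl⟩
        · exact ⟨(v, u), by rw [Finset.mem_coe, hmemS]; exact ⟨huv.symm, h.symm⟩, Sym2.eq_swap⟩
      · rintro ⟨⟨x, y⟩, hxy, heq⟩
        rw [Finset.mem_coe, hmemS] at hxy
        have h2 : s(x,y) ∈ G.edgeSet := hxy.1
        simp only [] at heq
        rwa [show s(x,y) = s(u,v) from heq] at h2
    have hinj : Set.InjOn (fun p : V × V => s(p.1, p.2)) ↑S := by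
      rintro ⟨x, y⟩ hx ⟨x', y'⟩ hx' h
      rw [Finset.mem_coe, hmemS] at hx hx'
      simp only [Sym2.eq_iff] at h
      rcases h with ⟨rfl, rfl⟩ | ⟨rfl, rfl⟩
      · rfl
      · exact absurd (hx.2.trans hx'.2.symm) (hvalid hx.1)
    rw [himg, Set.ncard_image_of_injOn hinj, Set.ncard_coe_finset]
  rw [hecard]
  by_cases hcb : c b = c a
  · -- Case A : c b = c a
    set Na : Finset V := Finset.univ.filter (fun v => G.Adj a v) with hNadef
    set Nb : Finset V := Finset.univ.filter (fun v => G.Adj b v) with hNbdef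
    have hmemNa : ∀ v, v ∈ Na ↔ G.Adj a v := by intro v; simp [hNadef]
    have hmemNb : ∀ v, v ∈ Nb ↔ G.Adj b v := by intro v; simp [hNbdef]
    have hXs : ∀ v, c v = c a → v = a ∨ v = b := by
      intro x hx
      by_contra h
      push_neg at h
      rcases hdomab x h.1 h.2 with hadj | hadj
      · exact (hvalid hadj) hx.symm
      · exact (hvalid hadj) (hcb.trans hx.symm)
    have hSeq : S = {a} ×ˢ Na ∪ {b} ×ˢ Nb := by
      ext ⟨x, y⟩
      rw [hmemS]
      simp only [Finset.mem_union, Finset.mem_product, Finset.mem_singleton, hmemNa, hmemNb]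
      constructor
      · rintro ⟨hadj, hcx⟩
        rcases hXs x hcx with rfl | rfl
        · exact Or.inl ⟨rfl, hadj⟩
        · exact Or.inr ⟨rfl, hadj⟩
      · rintro (⟨rfl, h⟩ | ⟨rfl, h⟩)
        · exact ⟨h, rfl⟩
        · exact ⟨h, hcb⟩
    have hdisj : Disjoint ({a} ×ˢ Na) ({b} ×ˢ Nb) := by
      rw [Finset.disjoint_left]
      rintro ⟨x, y⟩ h1 h2
      rw [Finset.mem_product, Finset.mem_singleton] at h1 h2
      exact hab (h1.1.symm.trans h2.1)
    have hcardS : S.card = Na.card + Nb.card := by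
      rw [hSeq, Finset.card_union_of_disjoint hdisj, Finset.card_product, Finset.card_product,
        Finset.card_singleton]
      simp
    have hsubY : Na ∪ Nb = Finset.univ.filter (fun v => ¬ c v = c a) := by
      ext v
      simp only [Finset.mem_union, hmemNa, hmemNb, Finset.mem_filter, Finset.mem_univ, true_and]
      constructor
      · rintro (h | h)
        · exact fun hh => (hvalid h) hh.symm
        · exact fun hh => (hvalid h) (hcb.trans hh.symm)
      · intro hv
        have hva : v ≠ a := fun h => hv (by rw [h])
        have hvb : v ≠ b := fun h => hv (by rw [h]; exact hcb)
        exact hdomab v hva hvb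
    have hYscard : (Finset.univ.filter (fun v => ¬ c v = c a)).card = n - 2 := by
      have h1 := Finset.card_filter_add_card_filter_not
        (s := (Finset.univ : Finset V)) (p := fun v => c v = c a)
      have hXs2 : Finset.univ.filter (fun v => c v = c a) = {a, b} := by
        ext x
        simp only [Finset.mem_filter, Finset.mem_univ, true_and, Finset.mem_insert,
          Finset.mem_singleton]
        constructor
        · exact hXs x
        · rintro (rfl | rfl)
          · rfl
          · exact hcb
      have h2 : (Finset.univ.filter (fun v => c v = c a)).card = 2 := by
        rw [hXs2]; exact Finset.card_pair hab
      have h3 : (Finset.univ : Finset V).card = n := by rw [Finset.card_univ, hn]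
      omega
    have hunion : (Na ∪ Nb).card = n - 2 := by rw [hsubY]; exact hYscard
    have hinterC := Finset.card_union_add_card_inter Na Nb
    have hee : S.card ≤ 2 * (n - 3) := by
      rcases Finset.eq_empty_or_nonempty (Na ∩ Nb) with hC | ⟨y₀, hy₀⟩
      · rw [hC, Finset.card_empty] at hinterC
        omega
      · rw [Finset.mem_inter, hmemNa, hmemNb] at hy₀
        obtain ⟨hay, hby⟩ := hy₀
        have hy0a : y₀ ≠ a := hay.ne'
        have hy0b : y₀ ≠ b := hby.ne'
        have hw1 : ∃ w ∈ Nb, w ∉ Na := by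
          by_contra h
          push_neg at h
          refine huniq2 y₀ a hy0a hy0a hy0b ?_
          intro v hv
          simp only [Finset.mem_insert, Finset.mem_singleton, not_or] at hv
          by_cases hcv : c v = c a
          · rcases hXs v hcv with rfl | rfl
            · exact absurd rfl hv.2
            · exact ⟨y₀, by simp, hby.symm⟩
          · have hmem : v ∈ Na ∪ Nb := by
              rw [hsubY]; exact Finset.mem_filter.mpr ⟨Finset.mem_univ v, hcv⟩
            have hvNa : v ∈ Na := by
              rcases Finset.mem_union.mp hmem with h' | h'
              · exact h'
              · exact h v h'
            exact ⟨a, by simp, (hmemNa v).mp hvNa⟩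
        have hw2 : ∃ w ∈ Na, w ∉ Nb := by
          by_contra h
          push_neg at h
          refine huniq2 y₀ b hy0b hy0a hy0b ?_
          intro v hv
          simp only [Finset.mem_insert, Finset.mem_singleton, not_or] at hv
          by_cases hcv : c v = c a
          · rcases hXs v hcv with rfl | rfl
            · exact ⟨y₀, by simp, hay.symm⟩
            · exact absurd rfl hv.2
          · have hmem : v ∈ Na ∪ Nb := by
              rw [hsubY]; exact Finset.mem_filter.mpr ⟨Finset.mem_univ v, hcv⟩
            have hvNb : v ∈ Nb := by
              rcases Finset.mem_union.mp hmem with h' | h'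
              · exact h v h'
              · exact h'
            exact ⟨b, by simp, (hmemNb v).mp hvNb⟩
        obtain ⟨w1, hw1b, hw1a⟩ := hw1
        obtain ⟨w2, hw2a, hw2b⟩ := hw2
        have hne12 : w1 ≠ w2 := fun h => hw1a (h ▸ hw2a)
        have hsub2 : insert w1 (insert w2 (Na ∩ Nb)) ⊆ Na ∪ Nb := by
          intro x hx
          simp only [Finset.mem_insert] at hx
          rcases hx with rfl | rfl | hx
          · exact Finset.mem_union_right _ hw1b
          · exact Finset.mem_union_left _ hw2a
          · exact Finset.mem_union_left _ (Finset.mem_inter.mp hx).1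
        have hc1 : w2 ∉ Na ∩ Nb := fun h => hw2b (Finset.mem_inter.mp h).2
        have hc2 : w1 ∉ insert w2 (Na ∩ Nb) := by
          simp only [Finset.mem_insert]
          rintro (rfl | h)
          · exact hne12 rfl
          · exact hw1a (Finset.mem_inter.mp h).1
        have hcard2 : (Na ∩ Nb).card + 2 ≤ n - 2 := by
          have hle := Finset.card_le_card hsub2
          rw [Finset.card_insert_of_notMem hc2, Finset.card_insert_of_notMem hc1, hunion] at hle
          omega
        omega
    exact final1 n S.card 2 (n - 3) h6 (by omega) hee
  · -- Case B : c b ≠ c a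
    set X' : Finset V := Finset.univ.filter (fun v => c v = c a ∧ v ≠ a) with hX'def
    set Y' : Finset V := Finset.univ.filter (fun v => ¬ c v = c a ∧ v ≠ b) with hY'def
    have hmemX' : ∀ v, v ∈ X' ↔ c v = c a ∧ v ≠ a := by intro v; simp [hX'def]
    have hmemY' : ∀ v, v ∈ Y' ↔ ¬ c v = c a ∧ v ≠ b := by intro v; simp [hY'def]
    have hX'b : ∀ v ∈ X', v ≠ b := by
      intro v hv h
      exact hcb (h ▸ ((hmemX' v).mp hv).1)
    have hY'a : ∀ v ∈ Y', v ≠ a := by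
      intro v hv h
      exact ((hmemY' v).mp hv).1 (h ▸ rfl)
    have hXb : ∀ x ∈ X', G.Adj b x := by
      intro x hx
      have hx' := (hmemX' x).mp hx
      rcases hdomab x hx'.2 (hX'b x hx) with h | h
      · exact absurd hx'.1.symm (hvalid h)
      · exact h
    have hYa : ∀ y ∈ Y', G.Adj a y := by
      intro y hy
      have hy' := (hmemY' y).mp hy
      rcases hdomab y (hY'a y hy) hy'.2 with h | h
      · exact h
      · exact absurd (fin2_eq (c y) (c b) (c a) hy'.1 hcb) (hvalid h).symm
    have hpq : X'.card + Y'.card = n - 2 := by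
      have hdisjXY : Disjoint X' Y' := by
        rw [Finset.disjoint_left]
        intro v hv hv'
        exact ((hmemY' v).mp hv').1 ((hmemX' v).mp hv).1
      have hun : X' ∪ Y' = Finset.univ \ {a, b} := by
        ext v
        simp only [Finset.mem_union, hmemX', hmemY', Finset.mem_sdiff, Finset.mem_univ,
          true_and, Finset.mem_insert, Finset.mem_singleton, not_or]
        constructor
        · rintro (⟨h1, h2⟩ | ⟨h1, h2⟩)
          · exact ⟨h2, fun h => hcb (h ▸ h1)⟩
          · exact ⟨fun h => h1 (h ▸ rfl), h2⟩
        · rintro ⟨h1, h2⟩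
          by_cases hcv : c v = c a
          · exact Or.inl ⟨hcv, h1⟩
          · exact Or.inr ⟨hcv, h2⟩
      have hcu := Finset.card_union_of_disjoint hdisjXY
      rw [hun, Finset.card_sdiff_of_subset (Finset.subset_univ _), Finset.card_univ, hn,
        Finset.card_pair hab] at hcu
      omega
    set M : Finset (V × V) := (X' ×ˢ Y').filter (fun pr => ¬ G.Adj pr.1 pr.2) with hMdef
    have hmemM : ∀ pr : V × V, pr ∈ M ↔ (pr.1 ∈ X' ∧ pr.2 ∈ Y') ∧ ¬ G.Adj pr.1 pr.2 := by
      intro pr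
      rw [hMdef, Finset.mem_filter, Finset.mem_product]
    set Sa := S.filter (fun pr => pr.1 = a) with hSadef
    set Sb := S.filter (fun pr => pr.1 ≠ a ∧ pr.2 = b) with hSbdef
    set S2 := S.filter (fun pr => pr.1 ≠ a ∧ pr.2 ≠ b) with hS2def
    have hcover : S ⊆ Sa ∪ Sb ∪ S2 := by
      intro pr hpr
      simp only [Finset.mem_union, hSadef, hSbdef, hS2def, Finset.mem_filter]
      by_cases h1 : pr.1 = a
      · exact Or.inl (Or.inl ⟨hpr, h1⟩)
      · by_cases h2 : pr.2 = b
        · exact Or.inl (Or.inr ⟨hpr, h1, h2⟩)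
        · exact Or.inr ⟨hpr, h1, h2⟩
    have hcardle : S.card ≤ Sa.card + Sb.card + S2.card :=
      le_trans (Finset.card_le_card hcover)
        (le_trans (Finset.card_union_le _ _)
          (Nat.add_le_add_right (Finset.card_union_le _ _) _))
    have hSbcard : Sb.card ≤ X'.card := by
      apply Finset.card_le_card_of_injOn Prod.fst
      · intro pr hpr
        rw [Finset.mem_coe, hSbdef, Finset.mem_filter] at hpr
        obtain ⟨hprS, h1, h2⟩ := hpr
        obtain ⟨hadj, hc1⟩ := (hmemS pr).mp hprS
        exact (hmemX' _).mpr ⟨hc1, h1⟩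
      · rintro ⟨x, y⟩ hx ⟨x', y'⟩ hx' h
        rw [Finset.mem_coe, hSbdef, Finset.mem_filter] at hx hx'
        simp only at h
        rw [Prod.ext_iff]
        exact ⟨h, hx.2.2.trans hx'.2.2.symm⟩
    have hS2M : S2.card + M.card = X'.card * Y'.card := by
      have hdisj2 : Disjoint S2 M := by
        rw [Finset.disjoint_left]
        intro pr h1 h2
        rw [hS2def, Finset.mem_filter] at h1
        exact ((hmemM pr).mp h2).2 ((hmemS pr).mp h1.1).1
      have hun2 : S2 ∪ M = X' ×ˢ Y' := by
        ext pr
        rw [Finset.mem_union, hS2def, Finset.mem_filter, hmemM, Finset.mem_product]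
        constructor
        · rintro (⟨hprS, h1, h2⟩ | ⟨h1, h2⟩)
          · obtain ⟨hadj, hc1⟩ := (hmemS pr).mp hprS
            exact ⟨(hmemX' _).mpr ⟨hc1, h1⟩,
              (hmemY' _).mpr ⟨fun hh => (hvalid hadj) (hc1.trans hh.symm), h2⟩⟩
          · exact h1
        · intro h
          by_cases hadj : G.Adj pr.1 pr.2
          · exact Or.inl ⟨(hmemS pr).mpr ⟨hadj, ((hmemX' _).mp h.1).1⟩,
              ((hmemX' _).mp h.1).2, ((hmemY' _).mp h.2).2⟩
          · exact Or.inr ⟨h, hadj⟩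
      have hcu := Finset.card_union_of_disjoint hdisj2
      rw [hun2, Finset.card_product] at hcu
      omega
    have hrowfull : ∀ x ∈ X', x ∉ M.image Prod.fst → ∀ y ∈ Y', G.Adj x y := by
      intro x hx hnx y hy
      by_contra hA
      exact hnx (Finset.mem_image.mpr ⟨(x, y), (hmemM _).mpr ⟨⟨hx, hy⟩, hA⟩, rfl⟩)
    have hcolfull : ∀ y ∈ Y', y ∉ M.image Prod.snd → ∀ x ∈ X', G.Adj x y := by
      intro y hy hny x hx
      by_contra hA
      exact hny (Finset.mem_image.mpr ⟨(x, y), (hmemM _).mpr ⟨⟨hx, hy⟩, hA⟩, rfl⟩)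
    by_cases hADJ : G.Adj a b
    · -- a adjacent to b
      have hSacard : Sa.card ≤ Y'.card + 1 := by
        have hbY : b ∉ Y' := fun h => ((hmemY' b).mp h).2 rfl
        have hcardins : (insert b Y').card = Y'.card + 1 := Finset.card_insert_of_notMem hbY
        rw [← hcardins]
        apply Finset.card_le_card_of_injOn Prod.snd
        · intro pr hpr
          rw [Finset.mem_coe, hSadef, Finset.mem_filter] at hpr
          obtain ⟨hprS, hpr1⟩ := hpr
          obtain ⟨hadj, -⟩ := (hmemS pr).mp hprS
          rw [hpr1] at hadj
          by_cases hb : pr.2 = b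
          · rw [hb]; exact Finset.mem_insert_self _ _
          · exact Finset.mem_insert_of_mem
              ((hmemY' _).mpr ⟨fun hh => (hvalid hadj) hh.symm, hb⟩)
        · rintro ⟨x, y⟩ hx ⟨x', y'⟩ hx' h
          rw [Finset.mem_coe, hSadef, Finset.mem_filter] at hx hx'
          simp only at h
          rw [Prod.ext_iff]
          exact ⟨hx.2.trans hx'.2.symm, h⟩
      have hfst : X' ⊆ M.image Prod.fst := by
        intro x₀ hx₀X
        by_contra hx₀
        have hx₀f := hrowfull x₀ hx₀X hx₀
        refine huniq2 x₀ b (hX'b _ hx₀X) ((hmemX' _).mp hx₀X).2 (hX'b _ hx₀X) ?_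
        intro v hv
        simp only [Finset.mem_insert, Finset.mem_singleton, not_or] at hv
        by_cases hva : v = a
        · subst hva; exact ⟨b, by simp, hADJ.symm⟩
        by_cases hcv : c v = c a
        · exact ⟨b, by simp, hXb v ((hmemX' v).mpr ⟨hcv, hva⟩)⟩
        · exact ⟨x₀, by simp, hx₀f v ((hmemY' v).mpr ⟨hcv, hv.2⟩)⟩
      have hsnd : Y' ⊆ M.image Prod.snd := by
        intro y₀ hy₀Y
        by_contra hy₀
        have hy₀f := hcolfull y₀ hy₀Y hy₀
        refine huniq2 y₀ a (hY'a _ hy₀Y) (hY'a _ hy₀Y) ((hmemY' _).mp hy₀Y).2 ?_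
        intro v hv
        simp only [Finset.mem_insert, Finset.mem_singleton, not_or] at hv
        by_cases hvb : v = b
        · subst hvb; exact ⟨a, by simp, hADJ⟩
        by_cases hcv : c v = c a
        · exact ⟨y₀, by simp, (hy₀f v ((hmemX' v).mpr ⟨hcv, hv.2⟩)).symm⟩
        · exact ⟨a, by simp, hYa v ((hmemY' v).mpr ⟨hcv, hvb⟩)⟩
      have hMp : X'.card ≤ M.card := le_trans (Finset.card_le_card hfst) Finset.card_image_le
      have hMq : Y'.card ≤ M.card := le_trans (Finset.card_le_card hsnd) Finset.card_image_le
      by_cases hpq2 : X'.card = Y'.card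
      · -- equal sides : need one more missing pair
        have hM1 : X'.card + 1 ≤ M.card := by
          by_contra hcon
          push_neg at hcon
          have hMcard : M.card = X'.card := by omega
          have hinjf : Set.InjOn (Prod.fst : V × V → V) (M : Set (V × V)) := by
            rw [← Finset.card_image_iff]
            have h1 : X'.card ≤ (M.image Prod.fst).card := Finset.card_le_card hfst
            have h2 : (M.image Prod.fst).card ≤ M.card := Finset.card_image_le
            omega
          have hinjs : Set.InjOn (Prod.snd : V × V → V) (M : Set (V × V)) := by
            rw [← Finset.card_image_iff]
            have h1 : Y'.card ≤ (M.image Prod.snd).card := Finset.card_le_card hsnd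
            have h2 : (M.image Prod.snd).card ≤ M.card := Finset.card_image_le
            omega
          have hX'ne : X'.Nonempty := by
            rw [← Finset.card_pos]; omega
          obtain ⟨x₁, hx₁⟩ := hX'ne
          obtain ⟨m, hmM, hm1⟩ := Finset.mem_image.mp (hfst hx₁)
          have hmm := (hmemM m).mp hmM
          have hy₁Y : m.2 ∈ Y' := hmm.1.2
          have hx₁y : x₁ ≠ m.2 := by
            intro h
            exact ((hmemY' _).mp hy₁Y).1 (h ▸ ((hmemX' _).mp hx₁).1)
          refine huniq2 x₁ m.2 hx₁y ((hmemX' _).mp hx₁).2 (hX'b _ hx₁) ?_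
          intro v hv
          simp only [Finset.mem_insert, Finset.mem_singleton, not_or] at hv
          by_cases hva : v = a
          · subst hva; exact ⟨m.2, by simp, (hYa _ hy₁Y).symm⟩
          by_cases hvb : v = b
          · subst hvb; exact ⟨x₁, by simp, (hXb _ hx₁).symm⟩
          by_cases hcv : c v = c a
          · have hvX : v ∈ X' := (hmemX' v).mpr ⟨hcv, hva⟩
            have hadjv : G.Adj v m.2 := by
              by_contra hA
              have hvM : (v, m.2) ∈ M := (hmemM _).mpr ⟨⟨hvX, hy₁Y⟩, hA⟩
              have heqm := hinjs (Finset.mem_coe.mpr hvM) (Finset.mem_coe.mpr hmM) rfl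
              exact hv.1 ((congrArg Prod.fst heqm).trans hm1)
            exact ⟨m.2, by simp, hadjv.symm⟩
          · have hvY : v ∈ Y' := (hmemY' v).mpr ⟨hcv, hvb⟩
            have hadjv : G.Adj x₁ v := by
              by_contra hA
              have hvM : (x₁, v) ∈ M := (hmemM _).mpr ⟨⟨hx₁, hvY⟩, hA⟩
              have heqm := hinjf (Finset.mem_coe.mpr hvM) (Finset.mem_coe.mpr hmM) hm1.symm
              exact hv.2 (congrArg Prod.snd heqm)
            exact ⟨x₁, by simp, hadjv⟩
        have he' : S.card ≤ X'.card * X'.card + X'.card := by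
          have hq : Y'.card = X'.card := hpq2.symm
          rw [hq] at hS2M hSacard
          linarith [hcardle, hSacard, hSbcard, hS2M, hM1]
        exact final3 n S.card X'.card (by omega) he'
      · rcases Nat.lt_or_ge X'.card Y'.card with hlt | hge
        · have he' : S.card ≤ X'.card * (Y'.card + 1) + 1 := by
            have hr : X'.card * (Y'.card + 1) + 1 = X'.card + X'.card * Y'.card + 1 := by ring
            rw [hr]
            linarith [hcardle, hSacard, hSbcard, hS2M, hMq]
          exact final2 n S.card X'.card (Y'.card + 1) h6 (by omega) (by omega) he'
        · have he' : S.card ≤ Y'.card * (X'.card + 1) + 1 := by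
            have hr : Y'.card * (X'.card + 1) + 1 = Y'.card + X'.card * Y'.card + 1 := by ring
            rw [hr]
            linarith [hcardle, hSacard, hSbcard, hS2M, hMp]
          exact final2 n S.card Y'.card (X'.card + 1) h6 (by omega) (by omega) he'
    · -- a not adjacent to b
      have hSacard : Sa.card ≤ Y'.card := by
        apply Finset.card_le_card_of_injOn Prod.snd
        · intro pr hpr
          rw [Finset.mem_coe, hSadef, Finset.mem_filter] at hpr
          obtain ⟨hprS, hpr1⟩ := hpr
          obtain ⟨hadj, -⟩ := (hmemS pr).mp hprS
          rw [hpr1] at hadj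
          exact (hmemY' _).mpr ⟨fun hh => (hvalid hadj) hh.symm, fun hh => hADJ (hh ▸ hadj)⟩
        · rintro ⟨x, y⟩ hx ⟨x', y'⟩ hx' h
          rw [Finset.mem_coe, hSadef, Finset.mem_filter] at hx hx'
          simp only at h
          rw [Prod.ext_iff]
          exact ⟨hx.2.trans hx'.2.symm, h⟩
      have hor : X' ⊆ M.image Prod.fst ∨ Y' ⊆ M.image Prod.snd := by
        by_contra h
        push_neg at h
        obtain ⟨h1, h2⟩ := h
        obtain ⟨x₀, hx₀X, hx₀⟩ := Finset.not_subset.mp h1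
        obtain ⟨y₀, hy₀Y, hy₀⟩ := Finset.not_subset.mp h2
        have hx₀f := hrowfull x₀ hx₀X hx₀
        have hy₀f := hcolfull y₀ hy₀Y hy₀
        have hx₀y₀ : x₀ ≠ y₀ := by
          intro hh
          exact ((hmemY' _).mp hy₀Y).1 (hh ▸ ((hmemX' _).mp hx₀X).1)
        refine huniq2 x₀ y₀ hx₀y₀ ((hmemX' _).mp hx₀X).2 (hX'b _ hx₀X) ?_
        intro v hv
        simp only [Finset.mem_insert, Finset.mem_singleton, not_or] at hv
        by_cases hva : v = a
        · subst hva; exact ⟨y₀, by simp, (hYa y₀ hy₀Y).symm⟩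
        by_cases hvb : v = b
        · subst hvb; exact ⟨x₀, by simp, (hXb x₀ hx₀X).symm⟩
        by_cases hcv : c v = c a
        · exact ⟨y₀, by simp, (hy₀f v ((hmemX' v).mpr ⟨hcv, hva⟩)).symm⟩
        · exact ⟨x₀, by simp, hx₀f v ((hmemY' v).mpr ⟨hcv, hvb⟩)⟩
      rcases hor with h | h
      · have hMp : X'.card ≤ M.card := le_trans (Finset.card_le_card h) Finset.card_image_le
        have he' : S.card ≤ Y'.card * (X'.card + 1) := by
          have hr : Y'.card * (X'.card + 1) = Y'.card + X'.card * Y'.card := by ring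
          rw [hr]
          linarith [hcardle, hSacard, hSbcard, hS2M, hMp]
        exact final1 n S.card Y'.card (X'.card + 1) h6 (by omega) he'
      · have hMq : Y'.card ≤ M.card := le_trans (Finset.card_le_card h) Finset.card_image_le
        have he' : S.card ≤ X'.card * (Y'.card + 1) := by
          have hr : X'.card * (Y'.card + 1) = X'.card + X'.card * Y'.card := by ring
          rw [hr]
          linarith [hcardle, hSacard, hSbcard, hS2M, hMq]
        exact final1 n S.card X'.card (Y'.card + 1) h6 (by omega) he'
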